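/- arXiv:2303.07468 — 2 statements merged into one kernel-verified Lean document; each statement's English description precedes it below -/
import Mathlib

section
/- Let g : [0, c̄] → ℝ be differentiable with g(0) = 0, g'(c) ≥ 1, g convex on [0, c̄], c̄ > 0, and g(c̄) > c̄. Define the agent's best response to a linear contract with slope θ₁ ∈ [0,1] as c(θ₁) ∈ argmax_{c∈[0,c̄]} (θ₁ g(c) − c), with ties broken in favor of the principal, and the principal's payoff as P(θ₁) = (1 − θ₁) g(c(θ₁)). Then max_{θ₁∈[0,1]} P(θ₁) = g(c̄) − c̄, attained at θ₁* = c̄ / g(c̄). -/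
open Set

/-- Optimal linear contract under a convex surplus function extracts the
maximal social surplus: with `cθ θ₁` the agent's best response to slope `θ₁`
(ties broken in favor of the principal), the principal payoff
`P θ₁ = (1 - θ₁) * g (cθ θ₁)` attains its maximum `g c̄ - c̄` over `θ₁ ∈ [0,1]`
at `θ₁* = c̄ / g c̄`. -/
theorem linear_contract_optimal_convex (g : ℝ → ℝ) (cbar : ℝ) (hcbar : 0 < cbar)
    (hdiff : ∀ c ∈ Icc (0:ℝ) cbar, DifferentiableAt ℝ g c)
    (h0 : g 0 = 0)
    (hderiv : ∀ c ∈ Icc (0:ℝ) cbar, 1 ≤ deriv g c)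
    (hconv : ConvexOn ℝ (Icc (0:ℝ) cbar) g)
    (hsurplus : cbar < g cbar)
    (cθ : ℝ → ℝ)
    (hmem : ∀ θ₁ ∈ Icc (0:ℝ) 1, cθ θ₁ ∈ Icc (0:ℝ) cbar)
    (hbr : ∀ θ₁ ∈ Icc (0:ℝ) 1, IsMaxOn (fun c => θ₁ * g c - c) (Icc (0:ℝ) cbar) (cθ θ₁))
    (htie : ∀ θ₁ ∈ Icc (0:ℝ) 1, ∀ c ∈ Icc (0:ℝ) cbar,
      θ₁ * g c - c = θ₁ * g (cθ θ₁) - cθ θ₁ → (1 - θ₁) * g c ≤ (1 - θ₁) * g (cθ θ₁)) :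
    IsMaxOn (fun θ₁ => (1 - θ₁) * g (cθ θ₁)) (Icc (0:ℝ) 1) (cbar / g cbar) ∧
      cbar / g cbar ∈ Icc (0:ℝ) 1 ∧
      (1 - cbar / g cbar) * g (cθ (cbar / g cbar)) = g cbar - cbar := by
  have hgc : 0 < g cbar := lt_trans hcbar hsurplus
  set θ : ℝ := cbar / g cbar with hθdef
  have hθ0 : 0 < θ := div_pos hcbar hgc
  have hθ1 : θ < 1 := (div_lt_one hgc).mpr hsurplus
  have hθmem : θ ∈ Icc (0:ℝ) 1 := ⟨le_of_lt hθ0, le_of_lt hθ1⟩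
  have hcont : ContinuousOn g (Icc (0:ℝ) cbar) := fun x hx =>
    (hdiff x hx).continuousAt.continuousWithinAt
  -- g - id is monotone on Icc
  have hmono : MonotoneOn (fun c => g c - c) (Icc (0:ℝ) cbar) := by
    apply monotoneOn_of_deriv_nonneg (convex_Icc 0 cbar)
    · exact hcont.sub continuousOn_id
    · intro x hx
      rw [interior_Icc] at hx
      exact ((hdiff x ⟨le_of_lt hx.1, le_of_lt hx.2⟩).sub (differentiable_id.differentiableAt)).differentiableWithinAt
    · intro x hx
      rw [interior_Icc] at hx
      have hx' : x ∈ Icc (0:ℝ) cbar := ⟨le_of_lt hx.1, le_of_lt hx.2⟩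
      have : deriv (fun c => g c - c) x = deriv g x - 1 :=
        ((hdiff x hx').hasDerivAt.sub (hasDerivAt_id x)).deriv
      rw [this]
      linarith [hderiv x hx']
  -- g monotone on Icc
  have hgmono : MonotoneOn g (Icc (0:ℝ) cbar) := by
    apply monotoneOn_of_deriv_nonneg (convex_Icc 0 cbar) hcont
    · intro x hx
      rw [interior_Icc] at hx
      exact (hdiff x ⟨le_of_lt hx.1, le_of_lt hx.2⟩).differentiableWithinAt
    · intro x hx
      rw [interior_Icc] at hx
      linarith [hderiv x ⟨le_of_lt hx.1, le_of_lt hx.2⟩]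
  have h0mem : (0:ℝ) ∈ Icc (0:ℝ) cbar := ⟨le_refl _, le_of_lt hcbar⟩
  have hcbarmem : cbar ∈ Icc (0:ℝ) cbar := ⟨le_of_lt hcbar, le_refl _⟩
  have hθg : θ * g cbar = cbar := div_mul_cancel₀ cbar (ne_of_gt hgc)
  -- the agent objective at θ is convex; its max value on Icc is 0
  have hcvx : ConvexOn ℝ (Icc (0:ℝ) cbar) (fun c => θ * g c - c) := by
    have h1 : ConvexOn ℝ (Icc (0:ℝ) cbar) (fun c => θ * g c) := by
      have := hconv.smul (le_of_lt hθ0)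
      simpa [smul_eq_mul] using this
    exact h1.sub (concaveOn_id (convex_Icc 0 cbar))
  have hle0 : ∀ c ∈ Icc (0:ℝ) cbar, θ * g c - c ≤ 0 := by
    intro c hc
    have hseg : c ∈ segment ℝ (0:ℝ) cbar := by
      rw [segment_eq_Icc (le_of_lt hcbar)]; exact hc
    have h := hcvx.le_on_segment h0mem hcbarmem hseg
    rw [h0, hθg] at h
    simpa using h
  set c₀ : ℝ := cθ θ with hc₀
  have hc₀mem : c₀ ∈ Icc (0:ℝ) cbar := hmem θ hθmem
  have hbrθ := hbr θ hθmem
  have hge : θ * g cbar - cbar ≤ θ * g c₀ - c₀ := hbrθ hcbarmem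
  have hval : θ * g c₀ - c₀ = 0 := le_antisymm (hle0 c₀ hc₀mem) (by rw [hθg] at hge; linarith)
  -- tie-breaking at cbar
  have htieθ : (1 - θ) * g cbar ≤ (1 - θ) * g c₀ := by
    apply htie θ hθmem cbar hcbarmem
    rw [hval, hθg]; ring
  have hgle : g c₀ ≤ g cbar := hgmono hc₀mem hcbarmem hc₀mem.2
  have hPθ : (1 - θ) * g c₀ = g cbar - cbar := by
    have h1 : (1 - θ) * g c₀ ≤ (1 - θ) * g cbar :=
      mul_le_mul_of_nonneg_left hgle (by linarith)
    have h2 : (1 - θ) * g cbar = g cbar - cbar := by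
      rw [sub_mul, one_mul, hθg]
    linarith
  refine ⟨?_, hθmem, hPθ⟩
  intro t ht
  simp only [mem_setOf_eq]
  set c := cθ t with hcdef
  have hcmem : c ∈ Icc (0:ℝ) cbar := hmem t ht
  have hir : 0 ≤ t * g c - c := by
    have := hbr t ht h0mem
    simpa [h0] using this
  have hgt : g c - c ≤ g cbar - cbar := hmono hcmem hcbarmem hcmem.2
  have hg0 : 0 ≤ g c := by
    have := hmono h0mem hcmem hcmem.1
    simp [h0] at this; linarith [hcmem.1]
  have : (1 - t) * g c ≤ g c - c := by nlinarith [ht.1]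
  calc (1 - t) * g c ≤ g c - c := this
    _ ≤ g cbar - cbar := hgt
    _ = (1 - θ) * g c₀ := hPθ.symm
end

section
/- Fix h > 0, k > 0, a₀ ≥ 0 and t ∈ [0,1]. With g(c) = k(√(2c/h) + t a₀), we have sup_{c ≥ 0} (g(c) − c) = (1/2)(k²/h) + k t a₀, and the principal's payoff under the linear contract with slope p = 1/2, namely (1/4)(k²/h) + (1/2) k t a₀, is at least half of this supremum. -/
open Set

/-- Forest conservation example, continued: with `g c = k (√(2c/h) + t a₀)`,
the maximal social surplus over `c ≥ 0` is `(1/2)(k²/h) + k t a₀`, and the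
principal's payoff under the slope-`1/2` linear contract,
`(1/4)(k²/h) + (1/2) k t a₀`, is at least half of it. -/
theorem forest_conservation_half_optimal
    (h k a₀ t : ℝ) (hh : 0 < h) (hk : 0 < k) (ha₀ : 0 ≤ a₀)
    (ht : t ∈ Icc (0:ℝ) 1) :
    IsGreatest ((fun c => k * (Real.sqrt (2 * c / h) + t * a₀) - c) '' Ici (0:ℝ))
        ((1/2) * (k^2 / h) + k * t * a₀) ∧
      (1/2) * ((1/2) * (k^2 / h) + k * t * a₀) ≤
        (1/4) * (k^2 / h) + (1/2) * k * t * a₀ := by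
  constructor
  · constructor
    · refine ⟨k^2 / (2 * h), ?_, ?_⟩
      · simp only [mem_Ici]; positivity
      · have hs : Real.sqrt (2 * (k^2 / (2 * h)) / h) = k / h := by
          rw [show 2 * (k^2 / (2 * h)) / h = (k / h)^2 by field_simp]
          exact Real.sqrt_sq (by positivity)
        simp only [hs]
        field_simp
        ring
    · rintro y ⟨c, hc, rfl⟩
      simp only [mem_Ici] at hc
      set s := Real.sqrt (2 * c / h) with hsdef
      have hs0 : 0 ≤ s := Real.sqrt_nonneg _
      have hsq : s ^ 2 = 2 * c / h := Real.sq_sqrt (by positivity)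
      have hc' : c = h * s ^ 2 / 2 := by
        field_simp at hsq; linarith [hsq]
      have key : k * s - h * s^2 / 2 ≤ k^2 / (2 * h) := by
        rw [le_div_iff₀ (by positivity)]
        nlinarith [sq_nonneg (h * s - k), hh.le]
      show k * (s + t * a₀) - c ≤ _
      have heq : k * (s + t * a₀) - c = (k * s - h * s^2/2) + k * t * a₀ := by
        rw [hc']; ring
      rw [heq]
      have : k^2 / (2*h) = (1/2) * (k^2 / h) := by ring
      linarith
  · nlinarith [mul_nonneg (mul_nonneg hk.le ht.1) ha₀, sq_nonneg k, div_nonneg (sq_nonneg k) hh.le]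
end
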